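/- arXiv:1812.11115 — 7 statements merged into one kernel-verified Lean document; each statement's English description precedes it below -/
import Mathlib

section
/- For every real number \alpha with -1 \le \alpha < 0, each of the seven quantities \Theta_{1,2} = 3^\alpha - (4/3)\cdot 5^\alpha + (1/3)\cdot 8^\alpha, \Theta_{1,3} = 4^\alpha - (10/9)\cdot 5^\alpha + (1/9)\cdot 8^\alpha, \Theta_{2,2} = 4^\alpha - (2/3)\cdot 5^\alpha - (1/3)\cdot 8^\alpha, \Theta_{2,3} = (5/9)(5^\alpha - 8^\alpha), \Theta_{2,4} = 6^\alpha - (1/3)\cdot 5^\alpha - (2/3)\cdot 8^\alpha, \Theta_{3,3} = 6^\alpha - (2/9)\cdot 5^\alpha - (7/9)\cdot 8^\alpha, and \Theta_{3,4} = 7^\alpha - (1/9)\cdot 5^\alpha - (8/9)\cdot 8^\alpha is strictly positive. -/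
open Real

lemma harm_aux (α w y z : ℝ) (h1 : -1 ≤ α) (h2 : α < 0) (hy : 0 < y) (hz : 0 < z)
    (hw0 : 0 ≤ w) (hw1 : w ≤ 1) :
    w * y ^ α + (1 - w) * z ^ α ≤ (1 / (w / y + (1 - w) / z)) ^ α := by
  obtain ⟨W, hWdef⟩ : ∃ W : ℝ, W = w / y + (1 - w) / z := ⟨_, rfl⟩
  rw [← hWdef]
  have hw1' : (0:ℝ) ≤ 1 - w := by linarith
  have hWpos : 0 < W := by
    rcases lt_or_ge 0 w with hw | hw
    · have h3 : 0 < w / y := div_pos hw hy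
      have h4 : 0 ≤ (1 - w) / z := div_nonneg hw1' hz.le
      rw [hWdef]; linarith
    · have hw' : w = 0 := le_antisymm hw hw0
      have h3 : 0 < (1 - w) / z := div_pos (by rw [hw']; norm_num) hz
      have h4 : 0 ≤ w / y := div_nonneg hw0 hy.le
      rw [hWdef]; linarith
  have hWne : W ≠ 0 := hWpos.ne'
  have hconc := Real.concaveOn_rpow (p := α + 1) (by linarith) (by linarith)
  have ha : (0:ℝ) ≤ w / (y * W) := by positivity
  have hb : (0:ℝ) ≤ (1 - w) / (z * W) := by positivity
  have hA : w / (y * W) * y = w / W := by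
    field_simp
  have hB : (1 - w) / (z * W) * z = (1 - w) / W := by
    field_simp
  have hab : w / (y * W) + (1 - w) / (z * W) = 1 := by
    rw [← div_div, ← div_div, ← add_div, ← hWdef, div_self hWne]
  have hjen := hconc.2 (Set.mem_Ici.2 hy.le) (Set.mem_Ici.2 hz.le) ha hb hab
  simp only [smul_eq_mul] at hjen
  have hcomb : w / (y * W) * y + (1 - w) / (z * W) * z = 1 / W := by
    rw [hA, hB, ← add_div]
    norm_num
  rw [hcomb] at hjen
  have hy1 : y ^ (α + 1) = y ^ α * y := by rw [Real.rpow_add hy, Real.rpow_one]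
  have hz1 : z ^ (α + 1) = z ^ α * z := by rw [Real.rpow_add hz, Real.rpow_one]
  have hm1 : (1 / W) ^ (α + 1) = (1 / W) ^ α * (1 / W) := by
    rw [Real.rpow_add (by positivity), Real.rpow_one]
  rw [hy1, hz1, hm1] at hjen
  have e1 : w / (y * W) * (y ^ α * y) = w / W * y ^ α := by
    rw [show w / (y * W) * (y ^ α * y) = (w / (y * W) * y) * y ^ α by ring, hA]
  have e2 : (1 - w) / (z * W) * (z ^ α * z) = (1 - w) / W * z ^ α := by
    rw [show (1 - w) / (z * W) * (z ^ α * z) = ((1 - w) / (z * W) * z) * z ^ α by ring, hB]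
  rw [e1, e2] at hjen
  have := mul_le_mul_of_nonneg_left hjen hWpos.le
  have lhs_eq : W * (w / W * y ^ α + (1 - w) / W * z ^ α) = w * y ^ α + (1 - w) * z ^ α := by
    field_simp
  have rhs_eq : W * ((1 / W) ^ α * (1 / W)) = (1 / W) ^ α := by
    field_simp
  rw [lhs_eq, rhs_eq] at this
  exact this

lemma harm_lt (α w x y z : ℝ) (h1 : -1 ≤ α) (h2 : α < 0) (hx : 0 < x) (hy : 0 < y)
    (hz : 0 < z) (hw0 : 0 ≤ w) (hw1 : w ≤ 1) (hlt : x < 1 / (w / y + (1 - w) / z)) :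
    w * y ^ α + (1 - w) * z ^ α < x ^ α := by
  calc w * y ^ α + (1 - w) * z ^ α ≤ (1 / (w / y + (1 - w) / z)) ^ α :=
        harm_aux α w y z h1 h2 hy hz hw0 hw1
    _ < x ^ α := Real.rpow_lt_rpow_of_neg hx hlt h2

lemma gm_aux (α w a b c : ℝ) (h2 : α < 0) (ha : 0 < a) (hb : 0 < b) (hc : 0 < c)
    (hw0 : 0 ≤ w) (hw1 : w ≤ 1) (hgm : a ^ w * b ^ (1 - w) < c) :
    c ^ α < w * a ^ α + (1 - w) * b ^ α := by
  have hgm0 : 0 < a ^ w * b ^ (1 - w) := by positivity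
  have h := Real.geom_mean_le_arith_mean2_weighted hw0 (by linarith : (0:ℝ) ≤ 1 - w)
    (Real.rpow_nonneg ha.le α) (Real.rpow_nonneg hb.le α) (by ring)
  have e1 : (a ^ α) ^ w = (a ^ w) ^ α := by
    rw [← Real.rpow_mul ha.le, ← Real.rpow_mul ha.le, mul_comm]
  have e2 : (b ^ α) ^ (1 - w) = (b ^ (1 - w)) ^ α := by
    rw [← Real.rpow_mul hb.le, ← Real.rpow_mul hb.le, mul_comm]
  rw [e1, e2, ← Real.mul_rpow (by positivity) (by positivity)] at h
  calc c ^ α < (a ^ w * b ^ (1 - w)) ^ α := Real.rpow_lt_rpow_of_neg hgm0 hgm h2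
    _ ≤ w * a ^ α + (1 - w) * b ^ α := h

lemma n1 : (3:ℝ) ^ ((3:ℝ)/4) * (8:ℝ) ^ (1 - (3:ℝ)/4) < 5 := by
  have e3 : (3:ℝ) ^ ((3:ℝ)/4) = (27:ℝ) ^ ((1:ℝ)/4) := by
    rw [show (27:ℝ) = 3 ^ (3:ℕ) by norm_num, ← Real.rpow_natCast 3 3,
      ← Real.rpow_mul (by norm_num)]
    norm_num
  have e8 : (8:ℝ) ^ (1 - (3:ℝ)/4) = (8:ℝ) ^ ((1:ℝ)/4) := by norm_num
  have e5 : (5:ℝ) = (625:ℝ) ^ ((1:ℝ)/4) := by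
    rw [show (625:ℝ) = 5 ^ (4:ℕ) by norm_num, ← Real.rpow_natCast 5 4,
      ← Real.rpow_mul (by norm_num)]
    norm_num
  rw [e3, e8, ← Real.mul_rpow (by norm_num) (by norm_num), e5]
  apply Real.rpow_lt_rpow (by norm_num) (by norm_num) (by norm_num)

lemma n2 : (4:ℝ) ^ ((9:ℝ)/10) * (8:ℝ) ^ (1 - (9:ℝ)/10) < 5 := by
  have e4 : (4:ℝ) ^ ((9:ℝ)/10) = (262144:ℝ) ^ ((1:ℝ)/10) := by
    rw [show (262144:ℝ) = 4 ^ (9:ℕ) by norm_num, ← Real.rpow_natCast 4 9,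
      ← Real.rpow_mul (by norm_num)]
    norm_num
  have e8 : (8:ℝ) ^ (1 - (9:ℝ)/10) = (8:ℝ) ^ ((1:ℝ)/10) := by norm_num
  have e5 : (5:ℝ) = (9765625:ℝ) ^ ((1:ℝ)/10) := by
    rw [show (9765625:ℝ) = 5 ^ (10:ℕ) by norm_num, ← Real.rpow_natCast 5 10,
      ← Real.rpow_mul (by norm_num)]
    norm_num
  rw [e4, e8, ← Real.mul_rpow (by norm_num) (by norm_num), e5]
  apply Real.rpow_lt_rpow (by norm_num) (by norm_num) (by norm_num)

theorem stmt_5 (α : ℝ) (h1 : -1 ≤ α) (h2 : α < 0) :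
    0 < (3:ℝ) ^ α - (4/3) * (5:ℝ) ^ α + (1/3) * (8:ℝ) ^ α ∧
    0 < (4:ℝ) ^ α - (10/9) * (5:ℝ) ^ α + (1/9) * (8:ℝ) ^ α ∧
    0 < (4:ℝ) ^ α - (2/3) * (5:ℝ) ^ α - (1/3) * (8:ℝ) ^ α ∧
    0 < (5/9) * ((5:ℝ) ^ α - (8:ℝ) ^ α) ∧
    0 < (6:ℝ) ^ α - (1/3) * (5:ℝ) ^ α - (2/3) * (8:ℝ) ^ α ∧
    0 < (6:ℝ) ^ α - (2/9) * (5:ℝ) ^ α - (7/9) * (8:ℝ) ^ α ∧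
    0 < (7:ℝ) ^ α - (1/9) * (5:ℝ) ^ α - (8/9) * (8:ℝ) ^ α := by
  have t1 := gm_aux α (3/4) 3 8 5 h2 (by norm_num) (by norm_num) (by norm_num)
    (by norm_num) (by norm_num) n1
  have t2 := gm_aux α (9/10) 4 8 5 h2 (by norm_num) (by norm_num) (by norm_num)
    (by norm_num) (by norm_num) n2
  have t3 := harm_lt α (2/3) 4 5 8 h1 h2 (by norm_num) (by norm_num) (by norm_num)
    (by norm_num) (by norm_num) (by norm_num)
  have t4 : (8:ℝ) ^ α < (5:ℝ) ^ α :=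
    Real.rpow_lt_rpow_of_neg (by norm_num) (by norm_num) h2
  have t5 := harm_lt α (1/3) 6 5 8 h1 h2 (by norm_num) (by norm_num) (by norm_num)
    (by norm_num) (by norm_num) (by norm_num)
  have t6 := harm_lt α (2/9) 6 5 8 h1 h2 (by norm_num) (by norm_num) (by norm_num)
    (by norm_num) (by norm_num) (by norm_num)
  have t7 := harm_lt α (1/9) 7 5 8 h1 h2 (by norm_num) (by norm_num) (by norm_num)
    (by norm_num) (by norm_num) (by norm_num)
  norm_num at t1 t2 t3 t5 t6 t7
  refine ⟨by linarith, by linarith, by linarith, by linarith, by linarith, by linarith, by linarith⟩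
end

section
/- For every real number \alpha with 0 < \alpha \le 2, each of the seven quantities \Theta_{1,2} = 3^\alpha - (4/3)\cdot 5^\alpha + (1/3)\cdot 8^\alpha, \Theta_{1,3} = 4^\alpha - (10/9)\cdot 5^\alpha + (1/9)\cdot 8^\alpha, \Theta_{2,2} = 4^\alpha - (2/3)\cdot 5^\alpha - (1/3)\cdot 8^\alpha, \Theta_{2,3} = (5/9)(5^\alpha - 8^\alpha), \Theta_{2,4} = 6^\alpha - (1/3)\cdot 5^\alpha - (2/3)\cdot 8^\alpha, \Theta_{3,3} = 6^\alpha - (2/9)\cdot 5^\alpha - (7/9)\cdot 8^\alpha, and \Theta_{3,4} = 7^\alpha - (1/9)\cdot 5^\alpha - (8/9)\cdot 8^\alpha is strictly negative. -/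
open Real

/-- AM-GM based lower bound: if `r^(m+n) < p^m * q^n` then
`r^α < (m/(m+n)) p^α + (n/(m+n)) q^α` for `α > 0`. -/
lemma lower_aux (α p q r : ℝ) (m n : ℕ) (hp : 0 < p) (hq : 0 < q) (hr : 0 < r)
    (hα : 0 < α) (hD : 0 < m + n) (h : r ^ (m + n) < p ^ m * q ^ n) :
    r ^ α < ((m : ℝ) / ((m : ℝ) + n)) * p ^ α + ((n : ℝ) / ((m : ℝ) + n)) * q ^ α := by
  have hD0 : (0:ℝ) < (m:ℝ) + n := by exact_mod_cast hD
  have hw1 : (0:ℝ) ≤ (m:ℝ) / ((m:ℝ) + n) := by positivity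
  have hw2 : (0:ℝ) ≤ (n:ℝ) / ((m:ℝ) + n) := by positivity
  have hsum : (m:ℝ) / ((m:ℝ) + n) + (n:ℝ) / ((m:ℝ) + n) = 1 := by field_simp
  have gm := Real.geom_mean_le_arith_mean2_weighted hw1 hw2
    (Real.rpow_nonneg hp.le α) (Real.rpow_nonneg hq.le α) hsum
  have key : r ^ α < (p ^ α) ^ ((m:ℝ)/((m:ℝ)+n)) * (q ^ α) ^ ((n:ℝ)/((m:ℝ)+n)) := by
    have e1 : (p ^ α) ^ ((m:ℝ)/((m:ℝ)+n)) = (p ^ m : ℝ) ^ (α/((m:ℝ)+n)) := by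
      rw [← Real.rpow_natCast p m, ← Real.rpow_mul hp.le, ← Real.rpow_mul hp.le]
      congr 1
      field_simp
    have e2 : (q ^ α) ^ ((n:ℝ)/((m:ℝ)+n)) = (q ^ n : ℝ) ^ (α/((m:ℝ)+n)) := by
      rw [← Real.rpow_natCast q n, ← Real.rpow_mul hq.le, ← Real.rpow_mul hq.le]
      congr 1
      field_simp
    have e3 : r ^ α = ((r ^ (m+n) : ℝ)) ^ (α/((m:ℝ)+n)) := by
      rw [← Real.rpow_natCast r (m+n), ← Real.rpow_mul hr.le]
      congr 1
      push_cast
      field_simp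
    rw [e1, e2, ← Real.mul_rpow (by positivity) (by positivity), e3]
    exact Real.rpow_lt_rpow (by positivity) h (by positivity)
  linarith

/-- Convexity of `exp`: endpoint interpolation for `c ^ α` on `[0, 2]`. -/
lemma exp_interp (α c : ℝ) (hc : 0 < c) (hα : 0 ≤ α) (hα2 : α ≤ 2) :
    c ^ α ≤ (2 - α)/2 + α/2 * c ^ 2 := by
  have h := convexOn_exp.2 (Set.mem_univ (0:ℝ)) (Set.mem_univ (2 * Real.log c))
    (by linarith : (0:ℝ) ≤ (2 - α)/2) (by linarith : (0:ℝ) ≤ α/2) (by ring)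
  simp only [smul_eq_mul] at h
  have e1 : Real.exp ((2-α)/2 * 0 + α/2 * (2 * Real.log c)) = c ^ α := by
    rw [Real.rpow_def_of_pos hc]
    congr 1
    ring
  have e2 : Real.exp (2 * Real.log c) = c ^ 2 := by
    rw [two_mul, Real.exp_add, Real.exp_log hc, sq]
  rw [e1, Real.exp_zero, e2] at h
  linarith

/-- Convexity based upper bound on `[0,2]`. -/
lemma upper_aux (α x y z w : ℝ) (hx : 0 < x) (hy : 0 < y) (hz : 0 < z)
    (hw0 : 0 ≤ w) (hw1 : w ≤ 1) (hα : 0 < α) (hα2 : α ≤ 2)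
    (hval : w * x^2 + (1-w) * z^2 < y^2) :
    w * x ^ α + (1-w) * z ^ α < y ^ α := by
  have hyα : 0 < y ^ α := Real.rpow_pos_of_pos hy α
  have i1 := exp_interp α (x/y) (by positivity) hα.le hα2
  have i2 := exp_interp α (z/y) (by positivity) hα.le hα2
  have hy2 : (0:ℝ) < y^2 := by positivity
  have hnorm : w * (x/y)^2 + (1-w) * (z/y)^2 < 1 := by
    rw [div_pow, div_pow,
      show w*(x^2/y^2)+(1-w)*(z^2/y^2) = (w*x^2+(1-w)*z^2)/y^2 from by ring,
      div_lt_one hy2]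
    exact hval
  have key : w * (x/y)^α + (1-w) * (z/y)^α < 1 := by
    have p1 := mul_le_mul_of_nonneg_left i1 hw0
    have p2 := mul_le_mul_of_nonneg_left i2 (by linarith : (0:ℝ) ≤ 1-w)
    have p3 := mul_lt_mul_of_pos_left hnorm (by linarith : (0:ℝ) < α/2)
    nlinarith [p1, p2, p3]
  rw [Real.div_rpow hx.le hy.le, Real.div_rpow hz.le hy.le,
    show w*(x^α/y^α)+(1-w)*(z^α/y^α) = (w*x^α+(1-w)*z^α)/y^α from by ring,
    div_lt_one hyα] at key
  exact key

theorem stmt_6 (α : ℝ) (h1 : 0 < α) (h2 : α ≤ 2) :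
    (3:ℝ) ^ α - (4/3) * (5:ℝ) ^ α + (1/3) * (8:ℝ) ^ α < 0 ∧
    (4:ℝ) ^ α - (10/9) * (5:ℝ) ^ α + (1/9) * (8:ℝ) ^ α < 0 ∧
    (4:ℝ) ^ α - (2/3) * (5:ℝ) ^ α - (1/3) * (8:ℝ) ^ α < 0 ∧
    (5/9) * ((5:ℝ) ^ α - (8:ℝ) ^ α) < 0 ∧
    (6:ℝ) ^ α - (1/3) * (5:ℝ) ^ α - (2/3) * (8:ℝ) ^ α < 0 ∧
    (6:ℝ) ^ α - (2/9) * (5:ℝ) ^ α - (7/9) * (8:ℝ) ^ α < 0 ∧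
    (7:ℝ) ^ α - (1/9) * (5:ℝ) ^ α - (8/9) * (8:ℝ) ^ α < 0 := by
  refine ⟨?_, ?_, ?_, ?_, ?_, ?_, ?_⟩
  · have h := upper_aux α 3 5 8 (3/4) (by norm_num) (by norm_num) (by norm_num)
      (by norm_num) (by norm_num) h1 h2 (by norm_num)
    linarith
  · have h := upper_aux α 4 5 8 (9/10) (by norm_num) (by norm_num) (by norm_num)
      (by norm_num) (by norm_num) h1 h2 (by norm_num)
    linarith
  · have h := lower_aux α 5 8 4 2 1 (by norm_num) (by norm_num) (by norm_num) h1
      (by norm_num) (by norm_num)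
    norm_num at h
    linarith
  · have h : (5:ℝ) ^ α < (8:ℝ) ^ α :=
      Real.rpow_lt_rpow (by norm_num) (by norm_num) h1
    nlinarith
  · have h := lower_aux α 5 8 6 1 2 (by norm_num) (by norm_num) (by norm_num) h1
      (by norm_num) (by norm_num)
    norm_num at h
    linarith
  · have h := lower_aux α 5 8 6 2 7 (by norm_num) (by norm_num) (by norm_num) h1
      (by norm_num) (by norm_num)
    norm_num at h
    linarith
  · have h := lower_aux α 5 8 7 1 8 (by norm_num) (by norm_num) (by norm_num) h1
      (by norm_num) (by norm_num)
    norm_num at h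
    linarith
end

section
/- For every real number \alpha with -1 \le \alpha < 0, we have \min\{\Theta_{1,3}, \Theta_{2,3}, \Theta_{3,3}\} > \Theta_{3,4} > 0, where \Theta_{1,3} = 4^\alpha - (10/9)\cdot 5^\alpha + (1/9)\cdot 8^\alpha, \Theta_{2,3} = (5/9)(5^\alpha - 8^\alpha), \Theta_{3,3} = 6^\alpha - (2/9)\cdot 5^\alpha - (7/9)\cdot 8^\alpha, and \Theta_{3,4} = 7^\alpha - (1/9)\cdot 5^\alpha - (8/9)\cdot 8^\alpha. -/
set_option maxHeartbeats 1000000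

open Real

-- Bernoulli-type tangent line inequality for α ∈ [-1, 0]
lemma bern_neg {t α : ℝ} (ht : 0 < t) (h1 : -1 ≤ α) (h2 : α ≤ 0) :
    1 + α * (t - 1) ≤ t ^ α := by
  rcases le_or_gt (1 + α * (t - 1)) 0 with hm | hm
  · exact hm.trans (Real.rpow_pos_of_pos ht α).le
  · have hM : t ^ (-α) ≤ 1 + (-α) * (t - 1) := by
      have := rpow_one_add_le_one_add_mul_self (s := t - 1) (by linarith) (p := -α)
        (by linarith) (by linarith)
      simpa using this
    have hMpos : (0:ℝ) < t ^ (-α) := Real.rpow_pos_of_pos ht _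
    have hpos : (0:ℝ) < t ^ α := Real.rpow_pos_of_pos ht _
    have hprod : t ^ α * t ^ (-α) = 1 := by
      rw [← Real.rpow_add ht]; simp
    nlinarith [sq_nonneg (α * (t - 1)), mul_pos hm hpos]

-- tangent line bound: y^α ≥ x^α + α x^(α-1) (y - x)
lemma tangent {x y α : ℝ} (hx : 0 < x) (hy : 0 < y) (h1 : -1 ≤ α) (h2 : α ≤ 0) :
    x ^ α + α * x ^ (α - 1) * (y - x) ≤ y ^ α := by
  have ht : 0 < y / x := div_pos hy hx
  have hb := bern_neg ht h1 h2
  have hdiv : (y / x) ^ α = y ^ α / x ^ α := Real.div_rpow hy.le hx.le α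
  have hxm : x ^ (α - 1) = x ^ α / x := by
    rw [Real.rpow_sub hx, Real.rpow_one]
  have hxp : (0:ℝ) < x ^ α := Real.rpow_pos_of_pos hx α
  rw [hdiv] at hb
  rw [hxm]
  have h := mul_le_mul_of_nonneg_left hb hxp.le
  calc x ^ α + α * (x ^ α / x) * (y - x)
      = x ^ α * (1 + α * (y / x - 1)) := by field_simp
    _ ≤ x ^ α * (y ^ α / x ^ α) := h
    _ = y ^ α := by field_simp

theorem stmt_7 (α : ℝ) (h1 : -1 ≤ α) (h2 : α < 0) :
    min ((4:ℝ) ^ α - (10/9) * (5:ℝ) ^ α + (1/9) * (8:ℝ) ^ α)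
      (min ((5/9) * ((5:ℝ) ^ α - (8:ℝ) ^ α))
        ((6:ℝ) ^ α - (2/9) * (5:ℝ) ^ α - (7/9) * (8:ℝ) ^ α))
      > (7:ℝ) ^ α - (1/9) * (5:ℝ) ^ α - (8/9) * (8:ℝ) ^ α ∧
    (7:ℝ) ^ α - (1/9) * (5:ℝ) ^ α - (8/9) * (8:ℝ) ^ α > 0 := by
  have hna : (0:ℝ) < -α := by linarith
  have h5p : (0:ℝ) < (5:ℝ) ^ (α-1) := Real.rpow_pos_of_pos (by norm_num) _
  have h7p : (0:ℝ) < (7:ℝ) ^ (α-1) := Real.rpow_pos_of_pos (by norm_num) _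
  have h6p : (0:ℝ) < (6:ℝ) ^ (α-1) := Real.rpow_pos_of_pos (by norm_num) _
  have h8pos : (0:ℝ) < (8:ℝ) ^ α := Real.rpow_pos_of_pos (by norm_num) _
  -- 5^(α-1) ≤ (49/25) * 7^(α-1)
  have hratio : (5:ℝ) ^ (α-1) ≤ (49/25) * (7:ℝ) ^ (α-1) := by
    have h1' : ((5:ℝ)/7) ^ (α-1) ≤ ((5:ℝ)/7) ^ (-2:ℝ) :=
      Real.rpow_le_rpow_of_exponent_ge (by norm_num) (by norm_num) (by linarith)
    have h2' : ((5:ℝ)/7) ^ (-2:ℝ) = 49/25 := by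
      rw [show (-2:ℝ) = ((-2:ℤ):ℝ) by norm_num, Real.rpow_intCast]
      norm_num
    have h3' : ((5:ℝ)/7) ^ (α-1) = (5:ℝ) ^ (α-1) / (7:ℝ) ^ (α-1) :=
      Real.div_rpow (by norm_num) (by norm_num) _
    rw [h3', h2'] at h1'
    rw [div_le_iff₀ h7p] at h1'
    linarith
  -- strict monotonicity facts
  have h67 : (7:ℝ) ^ α < (6:ℝ) ^ α :=
    Real.rpow_lt_rpow_of_neg (by norm_num) (by norm_num) h2
  have h57 : (7:ℝ) ^ (α-1) < (5:ℝ) ^ (α-1) :=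
    Real.rpow_lt_rpow_of_neg (by norm_num) (by norm_num) (by linarith)
  -- tangent bounds
  have t54 := tangent (x := 5) (y := 4) (by norm_num) (by norm_num) h1 h2.le
  have t78 := tangent (x := 7) (y := 8) (by norm_num) (by norm_num) h1 h2.le
  have t65 := tangent (x := 6) (y := 5) (by norm_num) (by norm_num) h1 h2.le
  have t68 := tangent (x := 6) (y := 8) (by norm_num) (by norm_num) h1 h2.le
  have t76 := tangent (x := 7) (y := 6) (by norm_num) (by norm_num) h1 h2.le
  have t58 := tangent (x := 5) (y := 8) (by norm_num) (by norm_num) h1 h2.le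
  -- (A) 4^α + 8^α > 5^α + 7^α
  have hA : (5:ℝ) ^ α + (7:ℝ) ^ α < (4:ℝ) ^ α + (8:ℝ) ^ α := by
    have : α * (7:ℝ) ^ (α-1) - α * (5:ℝ) ^ (α-1) > 0 := by nlinarith
    nlinarith [t54, t78]
  -- (B) (2/3) 5^α + (1/3) 8^α > 7^α
  have hB : (7:ℝ) ^ α < (2/3) * (5:ℝ) ^ α + (1/3) * (8:ℝ) ^ α := by nlinarith [t65, t68]
  -- (C) 9·6^α + 8^α > 5^α + 9·7^α
  have hC : (5:ℝ) ^ α + 9 * (7:ℝ) ^ α < 9 * (6:ℝ) ^ α + (8:ℝ) ^ α := by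
    nlinarith [t76, t58, mul_pos hna h7p]
  -- (D) 9·7^α > 5^α + 8·8^α
  have hD : (5:ℝ) ^ α + 8 * (8:ℝ) ^ α < 9 * (7:ℝ) ^ α := by
    set u := ((7:ℝ)/8) ^ α with hu
    set v := ((5:ℝ)/8) ^ α with hv
    have hu1 : 1 < u := Real.one_lt_rpow_of_pos_of_lt_one_of_neg (by norm_num) (by norm_num) h2
    have hu2 : u ≤ 8/7 := by
      have := Real.rpow_le_rpow_of_exponent_ge (x := (7:ℝ)/8) (by norm_num) (by norm_num) h1
      have hm1 : ((7:ℝ)/8) ^ (-1:ℝ) = 8/7 := by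
        rw [show (-1:ℝ) = ((-1:ℤ):ℝ) by norm_num, Real.rpow_intCast]
        norm_num
      rw [hm1] at this; exact this
    have hvu : v < u ^ 4 := by
      have e1 : u ^ 4 = ((7:ℝ)/8) ^ (α * 4) := by
        rw [hu, ← Real.rpow_natCast (((7:ℝ)/8) ^ α) 4,
          ← Real.rpow_mul (by norm_num : (0:ℝ) ≤ 7/8)]
        norm_num
      have e2 : ((7:ℝ)/8) ^ (α * 4) = ((2401:ℝ)/4096) ^ α := by
        rw [mul_comm, Real.rpow_mul (by norm_num : (0:ℝ) ≤ 7/8)]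
        congr 1
        rw [show (4:ℝ) = ((4:ℕ):ℝ) by norm_num, Real.rpow_natCast]
        norm_num
      rw [e1, e2]
      exact Real.rpow_lt_rpow_of_neg (by norm_num) (by norm_num) h2
    have hpoly : u ^ 4 ≤ 9 * u - 8 := by
      have h3 : u ^ 3 ≤ (8/7:ℝ) ^ 3 := pow_le_pow_left₀ (by linarith) hu2 3
      have h2' : u ^ 2 ≤ (8/7:ℝ) ^ 2 := pow_le_pow_left₀ (by linarith) hu2 2
      have hfac : u ^ 3 + u ^ 2 + u - 8 ≤ 0 := by norm_num at h3 h2' ⊢; linarith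
      have key : u ^ 4 - 9*u + 8 = (u - 1) * (u ^ 3 + u ^ 2 + u - 8) := by ring
      nlinarith [mul_nonpos_of_nonneg_of_nonpos (by linarith : (0:ℝ) ≤ u - 1) hfac]
    have h7e : (7:ℝ) ^ α = u * (8:ℝ) ^ α := by
      rw [hu, Real.div_rpow (by norm_num) (by norm_num)]; field_simp
    have h5e : (5:ℝ) ^ α = v * (8:ℝ) ^ α := by
      rw [hv, Real.div_rpow (by norm_num) (by norm_num)]; field_simp
    rw [h7e, h5e]
    have hlt : v + 8 < 9 * u := by linarith
    nlinarith [mul_lt_mul_of_pos_right hlt h8pos]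
  refine ⟨?_, by linarith [hD]⟩
  rw [gt_iff_lt, lt_min_iff, lt_min_iff]
  refine ⟨by linarith, by linarith, by linarith⟩
end

section
/- For every real number \alpha with 1 < \alpha \le 2, we have \max\{\Theta_{2,3}, \Theta_{3,3}, \Theta_{3,4}\} < \Theta_{1,3} < 0, where \Theta_{1,3} = 4^\alpha - (10/9)\cdot 5^\alpha + (1/9)\cdot 8^\alpha, \Theta_{2,3} = (5/9)(5^\alpha - 8^\alpha), \Theta_{3,3} = 6^\alpha - (2/9)\cdot 5^\alpha - (7/9)\cdot 8^\alpha, and \Theta_{3,4} = 7^\alpha - (1/9)\cdot 5^\alpha - (8/9)\cdot 8^\alpha. -/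
private lemma bern {b c α : ℝ} (hb : 0 < b) (hc : 0 ≤ c) (hα : 1 ≤ α) :
    b ^ α * (1 + α * (c / b - 1)) ≤ c ^ α := by
  have hs : (-1 : ℝ) ≤ c / b - 1 := by
    have := div_nonneg hc hb.le; linarith
  have h := one_add_mul_self_le_rpow_one_add hs hα
  have hbpos : (0:ℝ) ≤ b ^ α := (Real.rpow_pos_of_pos hb α).le
  calc b ^ α * (1 + α * (c / b - 1)) ≤ b ^ α * (1 + (c / b - 1)) ^ α := by
        exact mul_le_mul_of_nonneg_left h hbpos
    _ = (b * (c / b)) ^ α := by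
        rw [Real.mul_rpow hb.le (by linarith)]; ring_nf
    _ = c ^ α := by rw [mul_div_cancel₀ _ hb.ne']

theorem stmt_8 (α : ℝ) (h1 : 1 < α) (h2 : α ≤ 2) :
    max ((5/9) * ((5:ℝ) ^ α - (8:ℝ) ^ α))
      (max ((6:ℝ) ^ α - (2/9) * (5:ℝ) ^ α - (7/9) * (8:ℝ) ^ α)
        ((7:ℝ) ^ α - (1/9) * (5:ℝ) ^ α - (8/9) * (8:ℝ) ^ α))
      < (4:ℝ) ^ α - (10/9) * (5:ℝ) ^ α + (1/9) * (8:ℝ) ^ α ∧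
    (4:ℝ) ^ α - (10/9) * (5:ℝ) ^ α + (1/9) * (8:ℝ) ^ α < 0 := by
  have hα : (1:ℝ) ≤ α := h1.le
  have hαpos : (0:ℝ) < α := by linarith
  have hA : (0:ℝ) < (4:ℝ) ^ α := Real.rpow_pos_of_pos (by norm_num) α
  have hB : (0:ℝ) < (5:ℝ) ^ α := Real.rpow_pos_of_pos (by norm_num) α
  have hC : (0:ℝ) < (6:ℝ) ^ α := Real.rpow_pos_of_pos (by norm_num) α
  have hD : (0:ℝ) < (7:ℝ) ^ α := Real.rpow_pos_of_pos (by norm_num) α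
  have hE : (0:ℝ) < (8:ℝ) ^ α := Real.rpow_pos_of_pos (by norm_num) α
  -- Bernoulli facts
  have hAB : (4:ℝ) ^ α * (1 + α * (1/4)) ≤ (5:ℝ) ^ α := by
    have := bern (b := 4) (c := 5) (α := α) (by norm_num) (by norm_num) hα
    norm_num at this ⊢; linarith
  have hEB : (8:ℝ) ^ α * (1 - α * (3/8)) ≤ (5:ℝ) ^ α := by
    have := bern (b := 8) (c := 5) (α := α) (by norm_num) (by norm_num) hα
    norm_num at this ⊢; linarith
  have hBE : (5:ℝ) ^ α * (1 + α * (3/5)) ≤ (8:ℝ) ^ α := by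
    have := bern (b := 5) (c := 8) (α := α) (by norm_num) (by norm_num) hα
    norm_num at this ⊢; linarith
  have hCA : (6:ℝ) ^ α * (1 - α * (1/3)) ≤ (4:ℝ) ^ α := by
    have := bern (b := 6) (c := 4) (α := α) (by norm_num) (by norm_num) hα
    norm_num at this ⊢; linarith
  have hBA : (5:ℝ) ^ α * (1 - α * (1/5)) ≤ (4:ℝ) ^ α := by
    have := bern (b := 5) (c := 4) (α := α) (by norm_num) (by norm_num) hα
    norm_num at this ⊢; linarith
  have hDE : (7:ℝ) ^ α * (1 + α * (1/7)) ≤ (8:ℝ) ^ α := by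
    have := bern (b := 7) (c := 8) (α := α) (by norm_num) (by norm_num) hα
    norm_num at this ⊢; linarith
  -- exponent comparisons
  have h2a : (2:ℝ) ^ α ≤ 4 := by
    have := Real.rpow_le_rpow_of_exponent_le (x := 2) (by norm_num) h2
    rwa [show ((2:ℝ)) ^ (2:ℝ) = 4 by
      rw [show (2:ℝ) = ((2:ℕ):ℝ) by norm_num, Real.rpow_natCast]; norm_num] at this
  have hEA : (8:ℝ) ^ α ≤ 4 * (4:ℝ) ^ α := by
    have h8 : (8:ℝ) ^ α = (2:ℝ) ^ α * (4:ℝ) ^ α := by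
      rw [← Real.mul_rpow (by norm_num) (by norm_num)]; norm_num
    rw [h8]
    exact mul_le_mul_of_nonneg_right h2a hA.le
  have h65 : (6:ℝ) ^ α ≤ 36/25 * (5:ℝ) ^ α := by
    have hr : ((6:ℝ)/5) ^ α ≤ ((6:ℝ)/5) ^ (2:ℝ) :=
      Real.rpow_le_rpow_of_exponent_le (by norm_num) h2
    have h652 : ((6:ℝ)/5) ^ (2:ℝ) = 36/25 := by
      rw [show (2:ℝ) = ((2:ℕ):ℝ) by norm_num, Real.rpow_natCast]; norm_num
    have h6 : (6:ℝ) ^ α = ((6:ℝ)/5) ^ α * (5:ℝ) ^ α := by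
      rw [← Real.mul_rpow (by norm_num) (by norm_num)]; norm_num
    rw [h6]
    exact mul_le_mul_of_nonneg_right (by rw [h652] at hr; exact hr) hB.le
  have h75 : 7/5 * (5:ℝ) ^ α < (7:ℝ) ^ α := by
    have hr : ((7:ℝ)/5) ^ (1:ℝ) < ((7:ℝ)/5) ^ α :=
      Real.rpow_lt_rpow_of_exponent_lt (by norm_num) h1
    rw [Real.rpow_one] at hr
    have h7 : (7:ℝ) ^ α = ((7:ℝ)/5) ^ α * (5:ℝ) ^ α := by
      rw [← Real.mul_rpow (by norm_num) (by norm_num)]; norm_num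
    rw [h7]
    exact mul_lt_mul_of_pos_right hr hB
  constructor
  · rw [max_lt_iff, max_lt_iff]
    refine ⟨?_, ?_, ?_⟩
    · nlinarith [mul_pos hαpos hB]
    · nlinarith [mul_pos hαpos hB]
    · nlinarith [mul_pos hαpos hB, mul_pos hαpos (mul_pos hαpos hB)]
  · nlinarith [mul_pos hαpos hA]
end

section
/- For every real number \alpha with -1 \le \alpha < 0, we have \min\{\Theta_{1,2}, \Theta_{2,2}, \Theta_{2,3}\} > \Theta_{2,4} > 0, where \Theta_{1,2} = 3^\alpha - (4/3)\cdot 5^\alpha + (1/3)\cdot 8^\alpha, \Theta_{2,2} = 4^\alpha - (2/3)\cdot 5^\alpha - (1/3)\cdot 8^\alpha, \Theta_{2,3} = (5/9)(5^\alpha - 8^\alpha), and \Theta_{2,4} = 6^\alpha - (1/3)\cdot 5^\alpha - (2/3)\cdot 8^\alpha. -/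
open Real Set

/-- `x ↦ x ^ α` is strictly convex on `(0, ∞)` for negative `α`. -/
lemma strictConvexOn_rpow_of_neg {α : ℝ} (hα : α < 0) :
    StrictConvexOn ℝ (Set.Ioi 0) (fun x : ℝ => x ^ α) := by
  have hf : StrictConvexOn ℝ (Set.Ioi 0) (fun x : ℝ => α * Real.log x) := by
    refine ⟨convex_Ioi 0, fun x hx y hy hxy a b ha hb hab => ?_⟩
    have h := strictConcaveOn_log_Ioi.2 hx hy hxy ha hb hab
    simp only [smul_eq_mul] at h ⊢
    nlinarith [h]
  have himg : (fun x : ℝ => α * Real.log x) '' Set.Ioi 0 = Set.univ := by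
    ext y
    simp only [Set.mem_image, Set.mem_univ, iff_true]
    refine ⟨Real.exp (y / α), Real.exp_pos _, ?_⟩
    rw [Real.log_exp]
    exact mul_div_cancel₀ y (ne_of_lt hα)
  have hg : StrictConvexOn ℝ ((fun x : ℝ => α * Real.log x) '' Set.Ioi 0) Real.exp := by
    rw [himg]; exact strictConvexOn_exp
  have hmono : StrictMonoOn Real.exp ((fun x : ℝ => α * Real.log x) '' Set.Ioi 0) :=
    Real.exp_strictMono.strictMonoOn _
  have hinj : Set.InjOn (fun x : ℝ => α * Real.log x) (Set.Ioi 0) := by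
    intro x hx y hy h
    exact Real.log_injOn_pos hx hy (mul_left_cancel₀ (ne_of_lt hα) h)
  have hcomp := hg.comp hf hmono hinj
  refine ⟨convex_Ioi 0, fun x hx y hy hxy a b ha hb hab => ?_⟩
  have h := hcomp.2 hx hy hxy ha hb hab
  have hx' : (0:ℝ) < x := hx
  have hy' : (0:ℝ) < y := hy
  have hz' : (0:ℝ) < a * x + b * y := by positivity
  simp only [Function.comp, smul_eq_mul] at h ⊢
  rw [Real.rpow_def_of_pos hx', Real.rpow_def_of_pos hy', Real.rpow_def_of_pos hz',
    mul_comm (Real.log x) α, mul_comm (Real.log y) α, mul_comm (Real.log _) α]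
  exact h

theorem stmt_9 (α : ℝ) (h1 : -1 ≤ α) (h2 : α < 0) :
    min ((3:ℝ) ^ α - (4/3) * (5:ℝ) ^ α + (1/3) * (8:ℝ) ^ α)
      (min ((4:ℝ) ^ α - (2/3) * (5:ℝ) ^ α - (1/3) * (8:ℝ) ^ α)
        ((5/9) * ((5:ℝ) ^ α - (8:ℝ) ^ α)))
      > (6:ℝ) ^ α - (1/3) * (5:ℝ) ^ α - (2/3) * (8:ℝ) ^ α ∧
    (6:ℝ) ^ α - (1/3) * (5:ℝ) ^ α - (2/3) * (8:ℝ) ^ α > 0 := by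
  have hsc := strictConvexOn_rpow_of_neg h2
  have hconv := hsc.convexOn
  -- convexity instances
  have c1 : (7:ℝ) ^ α ≤ (1/3) * (5:ℝ) ^ α + (2/3) * (8:ℝ) ^ α := by
    have := hconv.2 (show (5:ℝ) ∈ Set.Ioi 0 by norm_num) (show (8:ℝ) ∈ Set.Ioi 0 by norm_num)
      (by norm_num : (0:ℝ) ≤ 1/3) (by norm_num : (0:ℝ) ≤ 2/3) (by norm_num)
    norm_num [smul_eq_mul] at this
    convert this using 2 <;> norm_num
  have c2 : ((16:ℝ)/3) ^ α ≤ (8/9) * (5:ℝ) ^ α + (1/9) * (8:ℝ) ^ α := by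
    have := hconv.2 (show (5:ℝ) ∈ Set.Ioi 0 by norm_num) (show (8:ℝ) ∈ Set.Ioi 0 by norm_num)
      (by norm_num : (0:ℝ) ≤ 8/9) (by norm_num : (0:ℝ) ≤ 1/9) (by norm_num)
    norm_num [smul_eq_mul] at this
    convert this using 2 <;> norm_num
  have c3 : (6:ℝ) ^ α ≤ (1/2) * (4:ℝ) ^ α + (1/2) * (8:ℝ) ^ α := by
    have := hconv.2 (show (4:ℝ) ∈ Set.Ioi 0 by norm_num) (show (8:ℝ) ∈ Set.Ioi 0 by norm_num)
      (by norm_num : (0:ℝ) ≤ 1/2) (by norm_num : (0:ℝ) ≤ 1/2) (by norm_num)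
    norm_num [smul_eq_mul] at this
    convert this using 2 <;> norm_num
  have c4 : (5:ℝ) ^ α < (3/5) * (3:ℝ) ^ α + (2/5) * (8:ℝ) ^ α := by
    have := hsc.2 (show (3:ℝ) ∈ Set.Ioi 0 by norm_num) (show (8:ℝ) ∈ Set.Ioi 0 by norm_num)
      (by norm_num) (by norm_num : (0:ℝ) < 3/5) (by norm_num : (0:ℝ) < 2/5) (by norm_num)
    norm_num [smul_eq_mul] at this
    convert this using 2 <;> norm_num
  have c5 : (6:ℝ) ^ α ≤ (2/5) * (3:ℝ) ^ α + (3/5) * (8:ℝ) ^ α := by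
    have := hconv.2 (show (3:ℝ) ∈ Set.Ioi 0 by norm_num) (show (8:ℝ) ∈ Set.Ioi 0 by norm_num)
      (by norm_num : (0:ℝ) ≤ 2/5) (by norm_num : (0:ℝ) ≤ 3/5) (by norm_num)
    norm_num [smul_eq_mul] at this
    convert this using 2 <;> norm_num
  -- monotonicity instances
  have m1 : (7:ℝ) ^ α < (6:ℝ) ^ α :=
    Real.rpow_lt_rpow_of_neg (by norm_num) (by norm_num) h2
  have m2 : (6:ℝ) ^ α < ((16:ℝ)/3) ^ α :=
    Real.rpow_lt_rpow_of_neg (by norm_num) (by norm_num) h2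
  have m3 : (5:ℝ) ^ α < (4:ℝ) ^ α :=
    Real.rpow_lt_rpow_of_neg (by norm_num) (by norm_num) h2
  have m4 : (6:ℝ) ^ α < (5:ℝ) ^ α :=
    Real.rpow_lt_rpow_of_neg (by norm_num) (by norm_num) h2
  -- Bernoulli-type bound from convexity of exp in the exponent
  have hβ : 0 < -α := by linarith
  have hβ1 : -α ≤ 1 := by linarith
  have bern : ∀ c : ℝ, 0 < c → c ^ (-α) ≤ 1 - (-α) + (-α) * c := by
    intro c hc
    have hw1 : (0:ℝ) ≤ 1 - (-α) := by linarith
    have hw2 : (0:ℝ) ≤ -α := by linarith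
    have h := convexOn_exp.2 (Set.mem_univ (0:ℝ)) (Set.mem_univ (Real.log c)) hw1 hw2 (by ring)
    simp only [smul_eq_mul, mul_zero, zero_add, Real.exp_zero, Real.exp_log hc, mul_one] at h
    rw [Real.rpow_def_of_pos hc, mul_comm]
    exact h
  have e1 : ((6:ℝ)/5) ^ (-α) = (5:ℝ) ^ α / (6:ℝ) ^ α := by
    rw [Real.rpow_neg (by norm_num), Real.div_rpow (by norm_num) (by norm_num), inv_div]
  have e2 : ((6:ℝ)/8) ^ (-α) = (8:ℝ) ^ α / (6:ℝ) ^ α := by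
    rw [Real.rpow_neg (by norm_num), Real.div_rpow (by norm_num) (by norm_num), inv_div]
  have b1 : (5:ℝ) ^ α / (6:ℝ) ^ α ≤ 1 - (-α) + (-α) * (6/5) := by
    rw [← e1]; exact bern _ (by norm_num)
  have b2 : (8:ℝ) ^ α / (6:ℝ) ^ α ≤ 1 - (-α) + (-α) * (6/8) := by
    rw [← e2]; exact bern _ (by norm_num)
  have h6 : (0:ℝ) < (6:ℝ) ^ α := Real.rpow_pos_of_pos (by norm_num) α
  have hS : (5:ℝ) ^ α / (6:ℝ) ^ α + 2 * ((8:ℝ) ^ α / (6:ℝ) ^ α) < 3 := by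
    nlinarith [b1, b2]
  have key : (6:ℝ) ^ α - (1/3) * (5:ℝ) ^ α - (2/3) * (8:ℝ) ^ α > 0 := by
    have h5 : (5:ℝ) ^ α / (6:ℝ) ^ α * (6:ℝ) ^ α = (5:ℝ) ^ α := by
      field_simp
    have h8 : (8:ℝ) ^ α / (6:ℝ) ^ α * (6:ℝ) ^ α = (8:ℝ) ^ α := by
      field_simp
    nlinarith [mul_lt_mul_of_pos_right hS h6]
  constructor
  · refine lt_min (by linarith) (lt_min (by linarith) (by linarith))
  · linarith
end

section
/- Let G be a molecular graph with n \ge 5 vertices and m edges. Then the first Zagreb index satisfies M_1(G) \le 10m - 4n, with equality if and only if G has no vertex of degree 2 or 3. -/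
open Finset

theorem stmt_13 {V : Type*} [Fintype V] [DecidableEq V]
    (G : SimpleGraph V) [DecidableRel G.Adj]
    (hmax : ∀ v, G.degree v ≤ 4) (hmin : ∀ v, 1 ≤ G.degree v)
    (n m : ℕ) (hn : n = Fintype.card V) (hm : m = G.edgeFinset.card)
    (hn5 : 5 ≤ n)
    (M₁ : ℕ) (hM : M₁ = ∑ v, (G.degree v) ^ 2) :
    (M₁ : ℤ) ≤ 10 * m - 4 * n ∧
    ((M₁ : ℤ) = 10 * m - 4 * n ↔ ∀ v, G.degree v ≠ 2 ∧ G.degree v ≠ 3) := by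
  have hsum : ∑ v, G.degree v = 2 * m := by
    rw [hm]; exact G.sum_degrees_eq_twice_card_edges
  have hrhs : (10 * m - 4 * n : ℤ) = ∑ v : V, (5 * (G.degree v : ℤ) - 4) := by
    rw [Finset.sum_sub_distrib, ← Finset.mul_sum, ← Nat.cast_sum]
    simp [hsum, hn, Finset.card_univ]
    push_cast
    ring
  have hlhs : (M₁ : ℤ) = ∑ v : V, ((G.degree v : ℤ)) ^ 2 := by
    rw [hM]; push_cast; ring
  have hpt : ∀ v : V, ((G.degree v : ℤ)) ^ 2 ≤ 5 * (G.degree v : ℤ) - 4 := by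
    intro v
    have h1 := hmin v
    have h2 := hmax v
    interval_cases (G.degree v) <;> norm_num
  rw [hlhs, hrhs]
  constructor
  · exact Finset.sum_le_sum fun v _ => hpt v
  · rw [Finset.sum_eq_sum_iff_of_le fun v _ => hpt v]
    constructor
    · intro h v
      have := h v (Finset.mem_univ v)
      have h1 := hmin v
      have h2 := hmax v
      interval_cases (G.degree v) <;> simp_all
    · intro h v _
      obtain ⟨h2, h3⟩ := h v
      have h1 := hmin v
      have h4 := hmax v
      interval_cases (G.degree v) <;> simp_all
end

section
/- For every real number k with 0 < k \le 1, the inequalities \Phi_{1,2} > \Phi_{2,2} > \Phi_{2,3} > \Phi_{2,4} > 0 and \Phi_{1,3} > \Phi_{2,3} > \Phi_{3,3} > \Phi_{3,4} > 0 hold, where \Phi_{1,2} = (2\sqrt2/3)^k - (4/3)(4/5)^k + 1/3, \Phi_{1,3} = (\sqrt3/2)^k - (10/9)(4/5)^k + 1/9, \Phi_{2,2} = (2/3)(1-(4/5)^k), \Phi_{2,3} = (2\sqrt6/5)^k - (4/9)(4/5)^k - 5/9, \Phi_{2,4} = (2\sqrt2/3)^k - (1/3)(4/5)^k - 2/3,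 \Phi_{3,3} = (2/9)(1-(4/5)^k), and \Phi_{3,4} = (4\sqrt3/7)^k - (1/9)(4/5)^k - 8/9. -/
set_option maxHeartbeats 800000

/-- Strict lower bound: `1 + k * log p < p ^ k` for `0 < p ≠ 1`, `0 < k`. -/
lemma aux_rpow_lb (p k : ℝ) (hp : 0 < p) (hp1 : p ≠ 1) (hk : 0 < k) :
    1 + k * Real.log p < p ^ k := by
  have hlog : Real.log p ≠ 0 := by
    intro h
    rcases (Real.log_eq_zero).1 h with h' | h' | h' <;> simp_all <;> try linarith
  have hne : Real.log p * k ≠ 0 := mul_ne_zero hlog hk.ne'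
  have := Real.add_one_lt_exp hne
  rw [Real.rpow_def_of_pos hp]
  linarith

/-- Bernoulli upper bound: `p ^ k ≤ 1 + k * (p - 1)` for `0 ≤ p`, `0 ≤ k ≤ 1`. -/
lemma aux_rpow_ub (p k : ℝ) (hp : 0 ≤ p) (hk0 : 0 ≤ k) (hk1 : k ≤ 1) :
    p ^ k ≤ 1 + k * (p - 1) := by
  have h := rpow_one_add_le_one_add_mul_self (s := p - 1) (by linarith) hk0 hk1
  rw [show (1:ℝ) + (p - 1) = p by ring] at h
  exact h

theorem stmt_19 (k : ℝ) (h1 : 0 < k) (h2 : k ≤ 1) :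
    ((2 * Real.sqrt 2 / 3) ^ k - (4/3) * ((4:ℝ)/5) ^ k + 1/3
        > (2/3) * (1 - ((4:ℝ)/5) ^ k) ∧
      (2/3) * (1 - ((4:ℝ)/5) ^ k)
        > (2 * Real.sqrt 6 / 5) ^ k - (4/9) * ((4:ℝ)/5) ^ k - 5/9 ∧
      (2 * Real.sqrt 6 / 5) ^ k - (4/9) * ((4:ℝ)/5) ^ k - 5/9
        > (2 * Real.sqrt 2 / 3) ^ k - (1/3) * ((4:ℝ)/5) ^ k - 2/3 ∧
      (2 * Real.sqrt 2 / 3) ^ k - (1/3) * ((4:ℝ)/5) ^ k - 2/3 > 0) ∧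
    ((Real.sqrt 3 / 2) ^ k - (10/9) * ((4:ℝ)/5) ^ k + 1/9
        > (2 * Real.sqrt 6 / 5) ^ k - (4/9) * ((4:ℝ)/5) ^ k - 5/9 ∧
      (2 * Real.sqrt 6 / 5) ^ k - (4/9) * ((4:ℝ)/5) ^ k - 5/9
        > (2/9) * (1 - ((4:ℝ)/5) ^ k) ∧
      (2/9) * (1 - ((4:ℝ)/5) ^ k)
        > (4 * Real.sqrt 3 / 7) ^ k - (1/9) * ((4:ℝ)/5) ^ k - 8/9 ∧
      (4 * Real.sqrt 3 / 7) ^ k - (1/9) * ((4:ℝ)/5) ^ k - 8/9 > 0) := by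
  set s2 := Real.sqrt 2 with hs2def
  set s3 := Real.sqrt 3 with hs3def
  set s6 := Real.sqrt 6 with hs6def
  have hs2sq : s2 ^ 2 = 2 := Real.sq_sqrt (by norm_num)
  have hs3sq : s3 ^ 2 = 3 := Real.sq_sqrt (by norm_num)
  have hs6sq : s6 ^ 2 = 6 := Real.sq_sqrt (by norm_num)
  have hs2pos : 0 < s2 := Real.sqrt_pos.2 (by norm_num)
  have hs3pos : 0 < s3 := Real.sqrt_pos.2 (by norm_num)
  have hs6pos : 0 < s6 := Real.sqrt_pos.2 (by norm_num)
  have hs2ub : s2 ≤ 1.415 := by nlinarith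
  have hs3ub : s3 ≤ 1.7321 := by nlinarith
  have hs6ub : s6 ≤ 2.45 := by nlinarith
  -- base positivity and < 1
  have hpa0 : (0:ℝ) < 2 * s2 / 3 := by positivity
  have hpb0 : (0:ℝ) < 2 * s6 / 5 := by positivity
  have hpc0 : (0:ℝ) < s3 / 2 := by positivity
  have hpd0 : (0:ℝ) < 4 * s3 / 7 := by positivity
  have hpa1 : 2 * s2 / 3 < 1 := by linarith
  have hpb1 : 2 * s6 / 5 < 1 := by linarith
  have hpc1 : s3 / 2 < 1 := by linarith
  have hpd1 : 4 * s3 / 7 < 1 := by linarith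
  -- base squares
  have hpa2 : (2 * s2 / 3) ^ 2 = 8 / 9 := by rw [div_pow, mul_pow, hs2sq]; norm_num
  have hpb2 : (2 * s6 / 5) ^ 2 = 24 / 25 := by rw [div_pow, mul_pow, hs6sq]; norm_num
  have hpc2 : (s3 / 2) ^ 2 = 3 / 4 := by rw [div_pow, hs3sq]; norm_num
  have hpd2 : (4 * s3 / 7) ^ 2 = 48 / 49 := by rw [div_pow, mul_pow, hs3sq]; norm_num
  -- log lower bounds
  have hlog_pa : -(1/16 : ℝ) ≤ Real.log (2 * s2 / 3) := by
    have h := Real.log_pow (2 * s2 / 3) 2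
    rw [hpa2] at h
    have h89 : Real.log ((8:ℝ)/9) = - Real.log (9/8) := by
      rw [show ((8:ℝ)/9) = ((9:ℝ)/8)⁻¹ by norm_num, Real.log_inv]
    have hb : Real.log ((9:ℝ)/8) ≤ 1/8 := by
      have := Real.log_le_sub_one_of_pos (x := (9:ℝ)/8) (by norm_num); linarith
    push_cast at h
    linarith
  have hlog_pb : -(1/48 : ℝ) ≤ Real.log (2 * s6 / 5) := by
    have h := Real.log_pow (2 * s6 / 5) 2
    rw [hpb2] at h
    have h89 : Real.log ((24:ℝ)/25) = - Real.log (25/24) := by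
      rw [show ((24:ℝ)/25) = ((25:ℝ)/24)⁻¹ by norm_num, Real.log_inv]
    have hb : Real.log ((25:ℝ)/24) ≤ 1/24 := by
      have := Real.log_le_sub_one_of_pos (x := (25:ℝ)/24) (by norm_num); linarith
    push_cast at h
    linarith
  have hlog_pd : -(1/96 : ℝ) ≤ Real.log (4 * s3 / 7) := by
    have h := Real.log_pow (4 * s3 / 7) 2
    rw [hpd2] at h
    have h89 : Real.log ((48:ℝ)/49) = - Real.log (49/48) := by
      rw [show ((48:ℝ)/49) = ((49:ℝ)/48)⁻¹ by norm_num, Real.log_inv]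
    have hb : Real.log ((49:ℝ)/48) ≤ 1/48 := by
      have := Real.log_le_sub_one_of_pos (x := (49:ℝ)/48) (by norm_num); linarith
    push_cast at h
    linarith
  have hlog43 : Real.log ((4:ℝ)/3) ≤ 548/1815 := by
    have hsplit : ((4:ℝ)/3) = (11/10) * ((11/10) * (400/363)) := by norm_num
    rw [hsplit, Real.log_mul (by norm_num) (by norm_num),
      Real.log_mul (by norm_num) (by norm_num)]
    have b1 := Real.log_le_sub_one_of_pos (x := (11:ℝ)/10) (by norm_num)
    have b2 := Real.log_le_sub_one_of_pos (x := (400:ℝ)/363) (by norm_num)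
    norm_num at b1 b2 ⊢
    linarith
  have hlog_pc : -(274/1815 : ℝ) ≤ Real.log (s3 / 2) := by
    have h := Real.log_pow (s3 / 2) 2
    rw [hpc2] at h
    have h34 : Real.log ((3:ℝ)/4) = - Real.log (4/3) := by
      rw [show ((3:ℝ)/4) = ((4:ℝ)/3)⁻¹ by norm_num, Real.log_inv]
    push_cast at h
    linarith
  -- rpow bounds
  have hx_ub : ((4:ℝ)/5) ^ k ≤ 1 + k * ((4/5) - 1) :=
    aux_rpow_ub _ _ (by norm_num) h1.le h2
  have hx_lt1 : ((4:ℝ)/5) ^ k < 1 := Real.rpow_lt_one (by norm_num) (by norm_num) h1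
  have ha_lb : 1 + k * Real.log (2 * s2 / 3) < (2 * s2 / 3) ^ k :=
    aux_rpow_lb _ _ hpa0 hpa1.ne h1
  have hb_lb : 1 + k * Real.log (2 * s6 / 5) < (2 * s6 / 5) ^ k :=
    aux_rpow_lb _ _ hpb0 hpb1.ne h1
  have hc_lb : 1 + k * Real.log (s3 / 2) < (s3 / 2) ^ k :=
    aux_rpow_lb _ _ hpc0 hpc1.ne h1
  have hd_lb : 1 + k * Real.log (4 * s3 / 7) < (4 * s3 / 7) ^ k :=
    aux_rpow_lb _ _ hpd0 hpd1.ne h1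
  have hb_ub : (2 * s6 / 5) ^ k ≤ 1 + k * ((2 * s6 / 5) - 1) :=
    aux_rpow_ub _ _ hpb0.le h1.le h2
  have hb_lt1 : (2 * s6 / 5) ^ k < 1 := Real.rpow_lt_one hpb0.le hpb1 h1
  have hd_lt1 : (4 * s3 / 7) ^ k < 1 := Real.rpow_lt_one hpd0.le hpd1 h1
  have hab : (2 * s2 / 3) ^ k < (2 * s6 / 5) ^ k := by
    apply Real.rpow_lt_rpow hpa0.le _ h1
    nlinarith
  -- products with k
  have mka : k * (-(1/16 : ℝ)) ≤ k * Real.log (2 * s2 / 3) :=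
    mul_le_mul_of_nonneg_left hlog_pa h1.le
  have mkb : k * (-(1/48 : ℝ)) ≤ k * Real.log (2 * s6 / 5) :=
    mul_le_mul_of_nonneg_left hlog_pb h1.le
  have mkc : k * (-(274/1815 : ℝ)) ≤ k * Real.log (s3 / 2) :=
    mul_le_mul_of_nonneg_left hlog_pc h1.le
  have mkd : k * (-(1/96 : ℝ)) ≤ k * Real.log (4 * s3 / 7) :=
    mul_le_mul_of_nonneg_left hlog_pd h1.le
  have mkb2 : k * ((2 * s6 / 5) - 1) ≤ k * (-(1/50 : ℝ)) := by
    apply mul_le_mul_of_nonneg_left _ h1.le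
    linarith
  refine ⟨⟨?_, ?_, ?_, ?_⟩, ?_, ?_, ?_, ?_⟩
  · linarith only [ha_lb, mka, hx_ub, h1]
  · linarith only [hb_lt1, hx_lt1]
  · linarith only [hab, hx_lt1]
  · linarith only [ha_lb, mka, hx_ub, h1]
  · linarith only [hc_lb, mkc, hb_ub, mkb2, hx_ub, h1]
  · linarith only [hb_lb, mkb, hx_ub, h1]
  · linarith only [hx_lt1, hd_lt1]
  · linarith only [hd_lb, mkd, hx_ub, h1]
end
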